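/- arXiv:1502.05745 — 3 statements merged into one kernel-verified Lean document; each statement's English description precedes it below -/
import Mathlib

section
/- For every natural number n ≥ 2, the sum ∑_{x=1}^{n-1} (n(n-1))/(2x(n-x)) is at most 2·n·log₂(n). -/
open Finset

theorem stmt_0 (n : ℕ) (hn : 2 ≤ n) :
    ∑ x ∈ Finset.Icc 1 (n - 1), ((n : ℝ) * (n - 1)) / (2 * x * (n - x)) ≤
      2 * n * Real.logb 2 n := by
  have hn1 : (1:ℝ) ≤ n := by exact_mod_cast Nat.one_le_of_lt hn
  -- rewrite each term
  have hsplit : ∀ x ∈ Finset.Icc 1 (n-1),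
      ((n : ℝ) * (n - 1)) / (2 * x * (n - x)) =
      ((n:ℝ) - 1)/2 * (1/x + 1/((n:ℝ) - x)) := by
    intro x hx
    simp only [Finset.mem_Icc] at hx
    have hx1 : (1:ℝ) ≤ x := by exact_mod_cast hx.1
    have hxn : (x:ℝ) ≤ (n:ℝ) - 1 := by
      have : x + 1 ≤ n := by omega
      have := (Nat.cast_le (α := ℝ)).2 this
      push_cast at this; linarith
    have h1 : (x:ℝ) ≠ 0 := by linarith
    have h2 : (n:ℝ) - x ≠ 0 := by linarith
    field_simp
    ring
  rw [Finset.sum_congr rfl hsplit, ← Finset.mul_sum]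
  have hrefl : ∑ x ∈ Finset.Icc 1 (n-1), (1:ℝ)/((n:ℝ) - x)
      = ∑ x ∈ Finset.Icc 1 (n-1), (1:ℝ)/x := by
    apply Finset.sum_nbij' (fun x => n - x) (fun x => n - x)
    · intro a ha; simp only [Finset.mem_Icc] at ha ⊢; omega
    · intro a ha; simp only [Finset.mem_Icc] at ha ⊢; omega
    · intro a ha; simp only [Finset.mem_Icc] at ha; omega
    · intro a ha; simp only [Finset.mem_Icc] at ha; omega
    · intro a ha; simp only [Finset.mem_Icc] at ha
      have : ((n - a : ℕ) : ℝ) = (n:ℝ) - a := by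
        have : a ≤ n := by omega
        push_cast [this]; ring
      rw [this]
  have hharm : ∑ x ∈ Finset.Icc 1 (n-1), (1:ℝ)/x = ((harmonic (n-1) : ℚ) : ℝ) := by
    rw [harmonic_eq_sum_Icc]
    push_cast
    simp [one_div]
  have hbound : ((harmonic (n-1) : ℚ) : ℝ) ≤ 1 + Real.log n := by
    calc ((harmonic (n-1) : ℚ) : ℝ) ≤ 1 + Real.log ((n-1 : ℕ) : ℝ) := harmonic_le_one_add_log _
    _ ≤ 1 + Real.log n := by
        gcongr
        · have : 0 < n - 1 := by omega
          exact_mod_cast this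
        · exact_mod_cast Nat.sub_le n 1
  have hsum : ∑ x ∈ Finset.Icc 1 (n-1), (1/(x:ℝ) + 1/((n:ℝ) - x))
      ≤ 2 * (1 + Real.log n) := by
    rw [Finset.sum_add_distrib, hrefl, hharm]
    linarith
  have hL2 : Real.log 2 < 0.6931471808 := Real.log_two_lt_d9
  have hL2' : 0 < Real.log 2 := Real.log_pos (by norm_num)
  have hLn : Real.log 2 ≤ Real.log n := Real.log_le_log (by norm_num) (by exact_mod_cast hn)
  have hn2 : (2:ℝ) ≤ n := by exact_mod_cast hn
  have hln : 0 < Real.log n := lt_of_lt_of_le hL2' hLn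
  have hkey : ((n:ℝ) - 1)/2 * (2 * (1 + Real.log n)) ≤ 2 * n * Real.logb 2 n := by
    have heq : 2 * (n:ℝ) * Real.logb 2 n = (2 * n * Real.log n) / Real.log 2 := by
      rw [Real.logb]; ring
    rw [heq, le_div_iff₀ hL2']
    have hnn : (0:ℝ) ≤ (n:ℝ) - 1 := by linarith
    have h1 : ((n:ℝ)-1) * Real.log 2 ≤ ((n:ℝ)-1) * Real.log n :=
      mul_le_mul_of_nonneg_left hLn hnn
    have h2 : (((n:ℝ)-1) * Real.log n) * Real.log 2 ≤ (((n:ℝ)-1) * Real.log n) * 0.7 := by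
      have : (0:ℝ) ≤ ((n:ℝ)-1) * Real.log n := mul_nonneg hnn hln.le
      nlinarith
    nlinarith [hln.le, hn2, h1, h2]
  calc ((n:ℝ) - 1)/2 * ∑ x ∈ Finset.Icc 1 (n-1), (1/(x:ℝ) + 1/((n:ℝ) - x))
      ≤ ((n:ℝ) - 1)/2 * (2 * (1 + Real.log n)) := by
        apply mul_le_mul_of_nonneg_left hsum; linarith
    _ ≤ 2 * n * Real.logb 2 n := hkey
end

section
/- Let update be the LM transition function on Q = {-m,…,-1,1,…,m+1} (m > 0), and let (x',y') = update(x,y). Then |x'| ≥ min(|x|, m); that is, a node's absolute value never decreases, except possibly from m+1 down to m. -/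
def inQ (m x : ℤ) : Prop := (-m ≤ x ∧ x ≤ -1) ∨ (1 ≤ x ∧ x ≤ m + 1)

def contend (m x y : ℤ) : ℤ :=
  if max |x| |y| = m + 1 then m else max |x| |y| + 1

def minion (m x y : ℤ) : ℤ :=
  if max |x| |y| = m + 1 then -m else -max |x| |y|

def update (m x y : ℤ) : ℤ × ℤ :=
  (if 0 < x ∧ |y| ≤ |x| then contend m x y else minion m x y,
   if 0 < y ∧ |x| ≤ |y| then contend m x y else minion m x y)

theorem stmt_13 (m : ℤ) (hm : 0 < m) (x y : ℤ) (hx : inQ m x) (hy : inQ m y) :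
    min |x| m ≤ |(update m x y).1| := by
  have h1 : |x| ≤ max |x| |y| := le_max_left _ _
  have h0 : (0:ℤ) ≤ max |x| |y| := le_trans (abs_nonneg x) h1
  simp only [update]
  split
  · simp only [contend]
    split
    · rw [abs_of_nonneg hm.le]; omega
    · rw [abs_of_nonneg (show (0:ℤ) ≤ max |x| |y| + 1 by omega)]; omega
  · simp only [minion]
    split
    · rw [abs_neg, abs_of_nonneg hm.le]; omega
    · rw [abs_neg, abs_of_nonneg h0]; omega
end

section
/- Let c : V → ℤ be a configuration of a finite nonempty set V of nodes, each with state in Q = {-m,…,-1,1,…,m+1}, and suppose every configuration reachable from c by applying the LM update rule to pairs of distinct nodes contains at least one node with positive state. If in c exactly one node v has c(v) > 0, then in every configuration reachable from c, v is the unique node with positive state. -/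
/-- One interaction step between two distinct nodes of a configuration. -/
def Step (m : ℤ) {V : Type*} (c c' : V → ℤ) : Prop :=
  ∃ u w : V, u ≠ w ∧
    c' u = (update m (c u) (c w)).1 ∧
    c' w = (update m (c u) (c w)).2 ∧
    ∀ z : V, z ≠ u → z ≠ w → c' z = c z

/-- Reachability: reflexive-transitive closure of the step relation. -/
def Reachable (m : ℤ) {V : Type*} (c c' : V → ℤ) : Prop :=
  Relation.ReflTransGen (Step m) c c'

lemma minion_nonpos (m x y : ℤ) (hm : 0 < m) : minion m x y ≤ 0 := by
  unfold minion
  split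
  · linarith
  · have := abs_nonneg x
    have := le_max_left |x| |y|
    linarith

lemma contend_pos (m x y : ℤ) (hm : 0 < m) : 0 < contend m x y := by
  unfold contend
  split
  · exact hm
  · have := abs_nonneg x
    have := le_max_left |x| |y|
    linarith

lemma step_preserve (m : ℤ) (hm : 0 < m) {V : Type*} (b d : V → ℤ) (v : V)
    (hpos : 0 < b v) (hu : ∀ w, 0 < b w → w = v)
    (hstep : Step m b d) (hsome : ∃ z, 0 < d z) :
    0 < d v ∧ ∀ w, 0 < d w → w = v := by
  obtain ⟨u, w, huw, h1, h2, h3⟩ := hstep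
  have hle : ∀ z, z ≠ v → b z ≤ 0 := fun z hz =>
    le_of_not_gt (fun h => hz (hu z h))
  simp only [update] at h1 h2
  by_cases huv : u = v
  · subst huv
    have hwv : w ≠ u := Ne.symm huw
    have hbw : b w ≤ 0 := hle w hwv
    have h2' : d w ≤ 0 := by
      rw [if_neg (by push_neg; intro h; linarith)] at h2
      rw [h2]; exact minion_nonpos m _ _ hm
    by_cases hc : |b w| ≤ |b u|
    · rw [if_pos ⟨hpos, hc⟩] at h1
      have hdv : 0 < d u := h1 ▸ contend_pos m _ _ hm
      refine ⟨hdv, fun z hz => ?_⟩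
      by_contra hzv
      rcases eq_or_ne z w with rfl | hzw
      · linarith
      · rw [h3 z hzv hzw] at hz
        exact absurd (hle z hzv) (not_le.mpr hz)
    · rw [if_neg (fun h => hc h.2)] at h1
      have h1' : d u ≤ 0 := h1 ▸ minion_nonpos m _ _ hm
      obtain ⟨z, hz⟩ := hsome
      rcases eq_or_ne z u with rfl | hzu
      · linarith
      rcases eq_or_ne z w with rfl | hzw
      · linarith
      · rw [h3 z hzu hzw] at hz
        exact absurd (hle z hzu) (not_le.mpr hz)
  · have hbu : b u ≤ 0 := hle u huv
    have h1' : d u ≤ 0 := by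
      rw [if_neg (by push_neg; intro h; linarith)] at h1
      rw [h1]; exact minion_nonpos m _ _ hm
    by_cases hwv : w = v
    · subst hwv
      by_cases hc : |b u| ≤ |b w|
      · rw [if_pos ⟨hpos, hc⟩] at h2
        have hdv : 0 < d w := h2 ▸ contend_pos m _ _ hm
        refine ⟨hdv, fun z hz => ?_⟩
        by_contra hzv
        rcases eq_or_ne z u with rfl | hzu
        · linarith
        · rw [h3 z hzu hzv] at hz
          exact absurd (hle z hzv) (not_le.mpr hz)
      · rw [if_neg (fun h => hc h.2)] at h2
        have h2' : d w ≤ 0 := h2 ▸ minion_nonpos m _ _ hm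
        obtain ⟨z, hz⟩ := hsome
        rcases eq_or_ne z u with rfl | hzu
        · linarith
        rcases eq_or_ne z w with rfl | hzw
        · linarith
        · rw [h3 z hzu hzw] at hz
          exact absurd (hle z hzw) (not_le.mpr hz)
    · have hbw : b w ≤ 0 := hle w hwv
      have h2' : d w ≤ 0 := by
        rw [if_neg (by push_neg; intro h; linarith)] at h2
        rw [h2]; exact minion_nonpos m _ _ hm
      have hdv : d v = b v := h3 v (Ne.symm huv) (Ne.symm hwv)
      refine ⟨hdv ▸ hpos, fun z hz => ?_⟩
      rcases eq_or_ne z u with rfl | hzu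
      · linarith
      rcases eq_or_ne z w with rfl | hzw
      · linarith
      · rw [h3 z hzu hzw] at hz
        exact hu z hz

theorem stmt_15 (m : ℤ) (hm : 0 < m) {V : Type*} [Fintype V] [Nonempty V]
    (c : V → ℤ) (hQ : ∀ v, inQ m (c v))
    (halways : ∀ c', Reachable m c c' → ∃ v, 0 < c' v)
    (v : V) (hv : 0 < c v) (huniq : ∀ w, 0 < c w → w = v) :
    ∀ c', Reachable m c c' → 0 < c' v ∧ ∀ w, 0 < c' w → w = v := by
  intro c' hreach
  induction hreach with
  | refl => exact ⟨hv, huniq⟩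
  | @tail b d h1 h2 ih =>
    have hsome : ∃ z, 0 < d z := halways d (h1.tail h2)
    exact step_preserve m hm b d v ih.1 ih.2 h2 hsome
end
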